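/- Let F be a J-frame for a Krein space H with synthesis operator T, J-frame operator S = TT⁺, and let Q = P_{M₊ // M₋} be the projection onto M₊ = R(T₊) along M₋ = R(T₋). Then QT = TP₊ and QS = SQ⁺. -/

import Mathlib

noncomputable section

open scoped Classical

open Function

/-- The indefinite inner product `[x,y] = ⟨Jx, y⟩` induced by an operator `J`. -/
def kre {E : Type*} [NormedAddCommGroup E] [InnerProductSpace ℂ E]
    (J : E →L[ℂ] E) (x y : E) : ℂ := @inner ℂ _ _ (J x) y

/-- `J` is a fundamental symmetry: a selfadjoint unitary (involutive) operator. -/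
def IsFundSym {E : Type*} [NormedAddCommGroup E] [InnerProductSpace ℂ E] [CompleteSpace E]
    (J : E →L[ℂ] E) : Prop :=
  IsSelfAdjoint J ∧ J.comp J = ContinuousLinearMap.id ℂ E

/-- The J-orthogonal companion of a subspace. -/
def JorthCompanion {E : Type*} [NormedAddCommGroup E] [InnerProductSpace ℂ E]
    (J : E →L[ℂ] E) (S : Submodule ℂ E) : Submodule ℂ E where
  carrier := {x | ∀ s ∈ S, kre J x s = 0}
  zero_mem' := by intro s hs; simp [kre]
  add_mem' := by
    intro a b ha hb s hs
    have h1 := ha s hs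
    have h2 := hb s hs
    simp only [kre, map_add, inner_add_left] at h1 h2 ⊢
    rw [h1, h2, add_zero]
  smul_mem' := by
    intro c x hx s hs
    have h1 := hx s hs
    simp only [kre, map_smul, inner_smul_left] at h1 ⊢
    rw [h1, mul_zero]

/-- Uniformly J-positive subspace. -/
def UnifJPos {E : Type*} [NormedAddCommGroup E] [InnerProductSpace ℂ E]
    (J : E →L[ℂ] E) (S : Submodule ℂ E) : Prop :=
  ∃ α : ℝ, 0 < α ∧ ∀ x ∈ S, α * ‖x‖ ^ 2 ≤ (kre J x x).re

/-- Uniformly J-negative subspace. -/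
def UnifJNeg {E : Type*} [NormedAddCommGroup E] [InnerProductSpace ℂ E]
    (J : E →L[ℂ] E) (S : Submodule ℂ E) : Prop :=
  ∃ α : ℝ, 0 < α ∧ ∀ x ∈ S, (kre J x x).re ≤ -(α * ‖x‖ ^ 2)

/-- Maximal uniformly J-positive subspace. -/
def MaxUnifJPos {E : Type*} [NormedAddCommGroup E] [InnerProductSpace ℂ E]
    (J : E →L[ℂ] E) (S : Submodule ℂ E) : Prop :=
  UnifJPos J S ∧ ∀ S' : Submodule ℂ E, UnifJPos J S' → S ≤ S' → S' = S

/-- Maximal uniformly J-negative subspace. -/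
def MaxUnifJNeg {E : Type*} [NormedAddCommGroup E] [InnerProductSpace ℂ E]
    (J : E →L[ℂ] E) (S : Submodule ℂ E) : Prop :=
  UnifJNeg J S ∧ ∀ S' : Submodule ℂ E, UnifJNeg J S' → S ≤ S' → S' = S

/-- J-selfadjoint operator (with respect to the indefinite inner product of `J`). -/
def IsJSelfAdj {E : Type*} [NormedAddCommGroup E] [InnerProductSpace ℂ E]
    (J : E →L[ℂ] E) (A : E →L[ℂ] E) : Prop :=
  ∀ x y : E, kre J (A x) y = kre J x (A y)

/-- The J-order: `A ≤_J B` iff `B - A` is J-positive. -/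
def JLe {E : Type*} [NormedAddCommGroup E] [InnerProductSpace ℂ E]
    (J : E →L[ℂ] E) (A B : E →L[ℂ] E) : Prop :=
  ∀ x : E, 0 ≤ (kre J (B x - A x) x).re ∧ (kre J (B x - A x) x).im = 0

/-- The subspace of `ℓ²(I)` supported on a subset (given by a predicate) of `I`. -/
def suppSub {I : Type*} (A : I → Prop) : Submodule ℂ (lp (fun _ : I => ℂ) 2) where
  carrier := {x | ∀ i, ¬ A i → x i = 0}
  zero_mem' := by intro i _; rfl
  add_mem' := by
    intro a b ha hb i hi
    have : (↑(a + b) : ∀ i, ℂ) i = a i + b i := by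
      rw [lp.coeFn_add]; rfl
    simp [this, ha i hi, hb i hi]
  smul_mem' := by
    intro c x hx i hi
    have : (↑(c • x) : ∀ i, ℂ) i = c • x i := by
      rw [lp.coeFn_smul]; rfl
    simp [this, hx i hi]

variable {H : Type*} [NormedAddCommGroup H] [InnerProductSpace ℂ H] [CompleteSpace H]
variable {I : Type*} [DecidableEq I]

/-- `i` is a "positive index" for the family `f` w.r.t. `J`: `[f i, f i] ≥ 0`. -/
def posIdx {H : Type*} [NormedAddCommGroup H] [InnerProductSpace ℂ H]
    (J : H →L[ℂ] H) (f : I → H) (i : I) : Prop := 0 ≤ (kre J (f i) (f i)).re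

/-- The sign `σ_i = sgn [f i, f i]` (as a complex scalar, `+1` on `I₊` and `-1` on `I₋`). -/
def sgnv {H : Type*} [NormedAddCommGroup H] [InnerProductSpace ℂ H]
    (J : H →L[ℂ] H) (f : I → H) (i : I) : ℂ := if posIdx J f i then 1 else -1

/-- Closure of the span of the vectors of the family `h` with positive indices (signs taken
from the family `f`). -/
def posSpan {H : Type*} [NormedAddCommGroup H] [InnerProductSpace ℂ H]
    (J : H →L[ℂ] H) (f h : I → H) : Submodule ℂ H :=
  (Submodule.span ℂ {x | ∃ i, posIdx J f i ∧ h i = x}).topologicalClosure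

/-- Closure of the span of the vectors of the family `h` with negative indices. -/
def negSpan {H : Type*} [NormedAddCommGroup H] [InnerProductSpace ℂ H]
    (J : H →L[ℂ] H) (f h : I → H) : Submodule ℂ H :=
  (Submodule.span ℂ {x | ∃ i, ¬ posIdx J f i ∧ h i = x}).topologicalClosure

/-- A Bessel family in a Hilbert space. -/
def IsBessel {H : Type*} [NormedAddCommGroup H] [InnerProductSpace ℂ H]
    (g : I → H) : Prop :=
  ∃ β : ℝ, ∀ (x : H) (s : Finset I),
    ∑ i ∈ s, ‖@inner ℂ _ _ (g i) x‖ ^ 2 ≤ β * ‖x‖ ^ 2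

/-- `g` is a dual family for `f`: the signs coincide and the two indefinite
reconstruction formulas hold. -/
def IsDualFamily {H : Type*} [NormedAddCommGroup H] [InnerProductSpace ℂ H]
    (J : H →L[ℂ] H) (f g : I → H) : Prop :=
  (∀ i, Real.sign ((kre J (g i) (g i)).re) = Real.sign ((kre J (f i) (f i)).re)) ∧
  (∀ x : H, HasSum (fun i => (sgnv J f i * kre J x (f i)) • g i) x) ∧
  (∀ x : H, HasSum (fun i => (sgnv J f i * kre J x (g i)) • f i) x)


/-- With `Q = P_(M₊ // M₋)` one has `QT = TP₊` and `QS = SQ⁺`. -/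
theorem jframe_Q_intertwines
    (J : H →L[ℂ] H) (hJ : IsFundSym J) (f : I → H)
    (T : lp (fun _ : I => ℂ) 2 →L[ℂ] H)
    (hT : ∀ i, T (lp.single 2 i (1:ℂ)) = f i)
    (hTsurj : Function.Surjective T)
    (Pp Pm : lp (fun _ : I => ℂ) 2 →L[ℂ] lp (fun _ : I => ℂ) 2)
    (hPp : ∀ (x : lp (fun _ : I => ℂ) 2) (i : I), Pp x i = if posIdx J f i then x i else 0)
    (hPm : ∀ (x : lp (fun _ : I => ℂ) 2) (i : I), Pm x i = if posIdx J f i then 0 else x i)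
    (hJF : MaxUnifJPos J (LinearMap.range (T.comp Pp : lp (fun _ : I => ℂ) 2 →ₗ[ℂ] H)) ∧
      MaxUnifJNeg J (LinearMap.range (T.comp Pm : lp (fun _ : I => ℂ) 2 →ₗ[ℂ] H)))
    (Tp : H →L[ℂ] lp (fun _ : I => ℂ) 2)
    (hTp : ∀ (x : lp (fun _ : I => ℂ) 2) (y : H), kre J (T x) y = kre (Pp - Pm) x (Tp y))
    (Q : H →L[ℂ] H) (hQidem : Q.comp Q = Q)
    (hQran : LinearMap.range (Q : H →ₗ[ℂ] H) = LinearMap.range (T.comp Pp : lp (fun _ : I => ℂ) 2 →ₗ[ℂ] H))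
    (hQker : LinearMap.ker (Q : H →ₗ[ℂ] H) = LinearMap.range (T.comp Pm : lp (fun _ : I => ℂ) 2 →ₗ[ℂ] H))
    (Qp : H →L[ℂ] H) (hQp : ∀ x y : H, kre J (Q x) y = kre J x (Qp y)) :
    Q.comp T = T.comp Pp ∧ Q.comp (T.comp Tp) = (T.comp Tp).comp Qp := by
  classical
  -- coordinate description of `Pp - Pm`
  have hcoord : ∀ (x : lp (fun _ : I => ℂ) 2) (i : I),
      ((Pp - Pm) x) i = if posIdx J f i then x i else -x i := by
    intro x i
    rw [ContinuousLinearMap.sub_apply]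
    have h : (↑(Pp x - Pm x) : ∀ i, ℂ) i = Pp x i - Pm x i := by
      rw [lp.coeFn_sub]; rfl
    rw [h, hPp, hPm]
    by_cases hp : posIdx J f i <;> simp [hp]
  -- decomposition x = Pp x + Pm x
  have hdecomp : ∀ x : lp (fun _ : I => ℂ) 2, Pp x + Pm x = x := by
    intro x
    apply lp.ext
    funext i
    have h : (↑(Pp x + Pm x) : ∀ i, ℂ) i = Pp x i + Pm x i := by
      rw [lp.coeFn_add]; rfl
    rw [h, hPp, hPm]
    by_cases hp : posIdx J f i <;> simp [hp]
  have hQfix : ∀ z : H, z ∈ LinearMap.range (T.comp Pp : lp (fun _ : I => ℂ) 2 →ₗ[ℂ] H) → Q z = z := by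
    intro z hz
    rw [← hQran] at hz
    obtain ⟨w, rfl⟩ := hz
    have := congrFun (congrArg (DFunLike.coe) hQidem) w
    simpa using this
  have hQkill : ∀ z : H, z ∈ LinearMap.range (T.comp Pm : lp (fun _ : I => ℂ) 2 →ₗ[ℂ] H) → Q z = 0 := by
    intro z hz
    rw [← hQker] at hz
    exact hz
  have part1 : Q.comp T = T.comp Pp := by
    ext x
    have hx : T x = T (Pp x) + T (Pm x) := by rw [← map_add, hdecomp]
    simp only [ContinuousLinearMap.comp_apply]
    rw [hx, map_add, hQfix (T (Pp x)) ⟨x, rfl⟩, hQkill (T (Pm x)) ⟨x, rfl⟩, add_zero]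
  refine ⟨part1, ?_⟩
  -- Pp is selfadjoint
  have hPpsa : ∀ x y : lp (fun _ : I => ℂ) 2,
      (inner ℂ (Pp x) y : ℂ) = inner ℂ x (Pp y) := by
    intro x y
    rw [lp.inner_eq_tsum, lp.inner_eq_tsum]
    refine tsum_congr fun i => ?_
    rw [hPp, hPp]
    by_cases hp : posIdx J f i <;> simp [hp]
  have h2 : ∀ x : lp (fun _ : I => ℂ) 2, (Pp - Pm) (Pp x) = Pp x := by
    intro x
    apply lp.ext
    funext i
    rw [hcoord, hPp]
    by_cases hp : posIdx J f i <;> simp [hp, hPp]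
  have h3 : ∀ x : lp (fun _ : I => ℂ) 2, Pp ((Pp - Pm) x) = Pp x := by
    intro x
    apply lp.ext
    funext i
    rw [hPp, hPp, hcoord]
    by_cases hp : posIdx J f i <;> simp [hp]
  have hsurj : ∀ z : lp (fun _ : I => ℂ) 2, ∃ x, (Pp - Pm) x = z := by
    intro z
    refine ⟨(Pp - Pm) z, ?_⟩
    apply lp.ext
    funext i
    rw [hcoord, hcoord]
    by_cases hp : posIdx J f i <;> simp [hp]
  ext y
  -- D = Tp (Qp y) - Pp (Tp y) is zero
  have hkey : ∀ x : lp (fun _ : I => ℂ) 2,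
      (inner ℂ ((Pp - Pm) x) (Tp (Qp y) - Pp (Tp y)) : ℂ) = 0 := by
    intro x
    have e1 : (inner ℂ ((Pp - Pm) x) (Tp (Qp y)) : ℂ) = inner ℂ (Pp x) (Tp y) := by
      have a1 : (inner ℂ ((Pp - Pm) x) (Tp (Qp y)) : ℂ) = kre J (T x) (Qp y) :=
        (hTp x (Qp y)).symm
      have a2 : kre J (T x) (Qp y) = kre J (Q (T x)) y := (hQp (T x) y).symm
      have a3 : Q (T x) = T (Pp x) := by
        have := congrFun (congrArg (DFunLike.coe) part1) x
        simpa using this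
      have a4 : kre J (T (Pp x)) y = inner ℂ ((Pp - Pm) (Pp x)) (Tp y) := hTp (Pp x) y
      rw [a1, a2, a3, a4, h2]
    have e2 : (inner ℂ ((Pp - Pm) x) (Pp (Tp y)) : ℂ) = inner ℂ (Pp x) (Tp y) := by
      rw [← hPpsa, h3]
    rw [inner_sub_right, e1, e2, sub_self]
  have hD : Tp (Qp y) - Pp (Tp y) = 0 := by
    obtain ⟨x, hx⟩ := hsurj (Tp (Qp y) - Pp (Tp y))
    have := hkey x
    rw [hx] at this
    exact inner_self_eq_zero.mp this
  have hD' : Tp (Qp y) = Pp (Tp y) := by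
    have := sub_eq_zero.mp hD
    exact this
  simp only [ContinuousLinearMap.comp_apply]
  rw [hD']
  have a3 : Q (T (Tp y)) = T (Pp (Tp y)) := by
    have := congrFun (congrArg (DFunLike.coe) part1) (Tp y)
    simpa using this
  exact a3
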